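/- arXiv:1208.6328 — 3 statements merged into one kernel-verified Lean document; each statement's English description precedes it below -/
import Mathlib

section
/- For all real x, y, z with |x| ≤ 1, |y| ≤ 1, |z| ≤ 1, setting R = x·y − z·√(1−x²)·√(1−y²), one has |√(1−x²)·y + z·x·√(1−y²)| ≤ √(1−R²) and (1−y²)(1−z²) ≤ 1−R² and (1−x²)(1−z²) ≤ 1−R². -/
open MeasureTheory Real Set
open scoped ENNReal

noncomputable section

/-- `R = x y − z √(1−x²) √(1−y²)`. -/
def Rker (x y z : ℝ) : ℝ := x * y - z * Real.sqrt (1 - x ^ 2) * Real.sqrt (1 - y ^ 2)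

/-- The kernel `B_y(x, z, R)` of the asymmetric generalised translation operator. -/
def Bker (y x z : ℝ) : ℝ :=
  2 * (Real.sqrt (1 - x ^ 2) * y + z * x * Real.sqrt (1 - y ^ 2) +
      Real.sqrt (1 - x ^ 2) * (1 - y) * (1 - z ^ 2)) ^ 2 - (1 - Rker x y z ^ 2)

/-- The asymmetric generalised translation operator `T_y(f, x)`. -/
def Tgen (y : ℝ) (f : ℝ → ℝ) (x : ℝ) : ℝ :=
  (4 / (Real.pi * (1 - x ^ 2) * (1 + y) ^ 2)) *
    ∫ z in (-1 : ℝ)..1, Bker y x z * f (Rker x y z) / Real.sqrt (1 - z ^ 2)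

/-- The Jacobi differential operator `D_{x,2,2} = (1−x²) d²/dx² − 6x d/dx`. -/
def Dop (f : ℝ → ℝ) (x : ℝ) : ℝ := (1 - x ^ 2) * deriv (deriv f) x - 6 * x * deriv f x

/-- Weighted `L^p` norm `‖f(x) (1−x²)^α‖_p` on `[−1,1]`. -/
def wnorm (p : ℝ≥0∞) (α : ℝ) (f : ℝ → ℝ) : ℝ≥0∞ :=
  eLpNorm (fun x => f x * (1 - x ^ 2) ^ α) p (volume.restrict (Set.Icc (-1 : ℝ) 1))

/-- `h` is absolutely continuous on every closed subinterval of `(−1,1)`: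
it is the integral of its derivative there. -/
def LocAC (h : ℝ → ℝ) : Prop :=
  ∀ a b : ℝ, -1 < a → a ≤ b → b < 1 →
    IntervalIntegrable (deriv h) MeasureTheory.volume a b ∧
      ∀ x ∈ Set.Icc a b, h x = h a + ∫ t in a..x, deriv h t

/-- The system `P` consists of the Jacobi polynomials for the weight `(1−x)^a (1+x)^b`,
normalised by `P n 1 = 1`. -/
def IsJacobiSystem (a b : ℝ) (P : ℕ → ℝ → ℝ) : Prop :=
  (∀ n : ℕ, ∃ q : Polynomial ℝ, q.natDegree = n ∧ ∀ x, P n x = q.eval x) ∧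
  (∀ m n : ℕ, m ≠ n →
    ∫ x in (-1 : ℝ)..1, P m x * P n x * (1 - x) ^ a * (1 + x) ^ b = 0) ∧
  (∀ n : ℕ, P n 1 = 1)

/-- Conditions on `p` and `α` in the main theorems. -/
def ParamOK (p : ℝ≥0∞) (α : ℝ) : Prop :=
  1 ≤ p ∧
  (p = 1 → 1 / 2 < α ∧ α ≤ 1) ∧
  (1 < p → p ≠ ⊤ → 1 - 1 / (2 * p.toReal) < α ∧ α < 3 / 2 - 1 / (2 * p.toReal)) ∧
  (p = ⊤ → 1 ≤ α ∧ α < 3 / 2)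

/-- Best approximation of `f` by algebraic polynomials of degree at most `n − 1`. -/
def bestE (p : ℝ≥0∞) (α : ℝ) (n : ℕ) (f : ℝ → ℝ) : ℝ≥0∞ :=
  ⨅ (q : Polynomial ℝ) (_ : q.natDegree ≤ n - 1), wnorm p α (fun x => f x - q.eval x)

/-- The generalised modulus of smoothness `ω(f, δ)`. -/
def wmod (p : ℝ≥0∞) (α : ℝ) (f : ℝ → ℝ) (δ : ℝ) : ℝ≥0∞ :=
  ⨆ t ∈ Set.Icc (-δ) δ, wnorm p α (fun x => Tgen (Real.cos t) f x - f x)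

/-- The Peetre K-functional between `L^p_α` and the weighted Sobolev-type space. -/
def Kfun (p : ℝ≥0∞) (α : ℝ) (f : ℝ → ℝ) (δ : ℝ) : ℝ≥0∞ :=
  ⨅ (g : ℝ → ℝ) (_ : LocAC (deriv g) ∧ wnorm p α g < ⊤ ∧ wnorm p α (Dop g) < ⊤),
    wnorm p α (fun x => f x - g x) + ENNReal.ofReal (δ ^ 2) * wnorm p α (Dop g)

theorem R_inequalities (x y z : ℝ) (hx : |x| ≤ 1) (hy : |y| ≤ 1) (hz : |z| ≤ 1) :
    |Real.sqrt (1 - x ^ 2) * y + z * x * Real.sqrt (1 - y ^ 2)| ≤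
        Real.sqrt (1 - Rker x y z ^ 2) ∧
    (1 - y ^ 2) * (1 - z ^ 2) ≤ 1 - Rker x y z ^ 2 ∧
    (1 - x ^ 2) * (1 - z ^ 2) ≤ 1 - Rker x y z ^ 2 := by
  rw [abs_le] at hx hy hz
  set a := Real.sqrt (1 - x ^ 2) with ha
  set b := Real.sqrt (1 - y ^ 2) with hb
  have ha2 : a ^ 2 = 1 - x ^ 2 := Real.sq_sqrt (by nlinarith)
  have hb2 : b ^ 2 = 1 - y ^ 2 := Real.sq_sqrt (by nlinarith)
  have key : (a * y + z * x * b) ^ 2 + b ^ 2 * (1 - z ^ 2) = 1 - Rker x y z ^ 2 := by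
    simp only [Rker, ← ha, ← hb]; nlinarith [sq_nonneg (a*y + z*x*b)]
  have key3 : (b * x + z * y * a) ^ 2 + a ^ 2 * (1 - z ^ 2) = 1 - Rker x y z ^ 2 := by
    simp only [Rker, ← ha, ← hb]; nlinarith [sq_nonneg (b*x + z*y*a)]
  refine ⟨?_, ?_, ?_⟩
  · rw [← Real.sqrt_sq_eq_abs]
    apply Real.sqrt_le_sqrt
    have h1 : (0:ℝ) ≤ 1 - z ^ 2 := by nlinarith [hz.1, hz.2]
    nlinarith [mul_nonneg (sq_nonneg b) h1]
  · nlinarith [sq_nonneg (a*y + z*x*b), hb2]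
  · nlinarith [sq_nonneg (b*x + z*y*a), ha2]
end
end

section
/- For all real x, y, z with |x| ≤ 1, |y| ≤ 1, |z| ≤ 1, setting R = x·y − z·√(1−x²)·√(1−y²) and B_y(x,z,R) = 2·(√(1−x²)·y + z·x·√(1−y²) + √(1−x²)·(1−y)·(1−z²))² − (1−R²), one has |B_y(x,z,R)| ≤ 19·(1−R²). -/
open MeasureTheory Real Set
open scoped ENNReal

noncomputable section

set_option maxHeartbeats 1000000 in
theorem B_bound (x y z : ℝ) (hx : |x| ≤ 1) (hy : |y| ≤ 1) (hz : |z| ≤ 1) :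
    |Bker y x z| ≤ 19 * (1 - Rker x y z ^ 2) := by
  obtain ⟨hx1, hx2⟩ := abs_le.mp hx
  obtain ⟨hy1, hy2⟩ := abs_le.mp hy
  obtain ⟨hz1, hz2⟩ := abs_le.mp hz
  have hx2' : (0:ℝ) ≤ 1 - x ^ 2 := by nlinarith
  have hy2' : (0:ℝ) ≤ 1 - y ^ 2 := by nlinarith
  have hz2' : (0:ℝ) ≤ 1 - z ^ 2 := by nlinarith
  set sx := Real.sqrt (1 - x ^ 2) with hsx
  set sy := Real.sqrt (1 - y ^ 2) with hsy
  have hsx2 : sx ^ 2 = 1 - x ^ 2 := Real.sq_sqrt hx2'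
  have hsy2 : sy ^ 2 = 1 - y ^ 2 := Real.sq_sqrt hy2'
  have hsx0 : 0 ≤ sx := Real.sqrt_nonneg _
  have hsy0 : 0 ≤ sy := Real.sqrt_nonneg _
  set A := sx * y + z * x * sy with hA
  set t := sx * (1 - y) * (1 - z ^ 2) with ht
  set S := 1 - Rker x y z ^ 2 with hS
  have hS1 : S = A ^ 2 + (1 - y ^ 2) * (1 - z ^ 2) := by
    simp only [hS, hA, Rker, ← hsx, ← hsy]
    linear_combination (-(z ^ 2 * sy ^ 2 + y ^ 2)) * hsx2 + (-z ^ 2) * hsy2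
  have hS2 : S = (sy * x + z * y * sx) ^ 2 + (1 - x ^ 2) * (1 - z ^ 2) := by
    simp only [hS, Rker, ← hsx, ← hsy]
    linear_combination (-z ^ 2) * hsx2 + (-(z ^ 2 * sx ^ 2 + x ^ 2)) * hsy2
  have hS0 : 0 ≤ S := by
    rw [hS1]; positivity
  have hA2 : A ^ 2 ≤ S := by nlinarith [mul_nonneg hy2' hz2']
  have hsxz : sx ^ 2 * (1 - z ^ 2) ≤ S := by nlinarith [sq_nonneg (sy * x + z * y * sx)]
  have ht2 : t ^ 2 ≤ 4 * S := by
    have h1 : t ^ 2 = sx ^ 2 * (1 - z ^ 2) * ((1 - y) ^ 2 * (1 - z ^ 2)) := by ring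
    have h2 : (1 - y) ^ 2 * (1 - z ^ 2) ≤ 4 := by nlinarith
    have h3 : 0 ≤ sx ^ 2 * (1 - z ^ 2) := by positivity
    calc t ^ 2 = sx ^ 2 * (1 - z ^ 2) * ((1 - y) ^ 2 * (1 - z ^ 2)) := h1
      _ ≤ sx ^ 2 * (1 - z ^ 2) * 4 := by nlinarith
      _ ≤ S * 4 := by linarith [hsxz]
      _ = 4 * S := by ring
  have hAt : (A + t) ^ 2 ≤ 9 * S := by nlinarith [sq_nonneg (2 * A - t)]
  have hBker : Bker y x z = 2 * (A + t) ^ 2 - S := by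
    simp only [Bker, hS, hA, ht, ← hsx, ← hsy]
  rw [hBker, abs_le]
  constructor <;> nlinarith [sq_nonneg (A + t)]
end
end

section
/- For the constant function 1, the generalized translation operator satisfies T_y(1, x) = 1 for every x ∈ (−1,1) and y ∈ (−1,1]. -/
open MeasureTheory Real Set
open scoped ENNReal

noncomputable section

section AuxIntegrals
open intervalIntegral

lemma intInt_one_div_sqrt :
    IntervalIntegrable (fun z : ℝ => 1 / Real.sqrt (1 - z ^ 2)) volume (-1) 1 := by
  apply intervalIntegrable_deriv_of_nonneg (g := Real.arcsin)
  · exact Real.continuous_arcsin.continuousOn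
  · intro z hz
    rw [min_eq_left (by norm_num), max_eq_right (by norm_num)] at hz
    exact Real.hasDerivAt_arcsin hz.1.ne' hz.2.ne
  · intro z _; positivity

lemma intInt_monomial (c : ℝ) (k : ℕ) :
    IntervalIntegrable (fun z : ℝ => c * z ^ k / Real.sqrt (1 - z ^ 2)) volume (-1) 1 := by
  apply IntervalIntegrable.mono_fun (intInt_one_div_sqrt.const_mul |c|)
  · exact (((measurable_id.pow_const k).const_mul c).div
      ((measurable_const.sub (measurable_id.pow_const 2)).sqrt)).aestronglyMeasurable
  · filter_upwards [ae_restrict_mem measurableSet_uIoc] with z hz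
    rw [Set.uIoc_of_le (by norm_num : (-1:ℝ) ≤ 1)] at hz
    have h1 : |z| ≤ 1 := abs_le.2 ⟨hz.1.le, hz.2⟩
    have hzk : |z| ^ k ≤ 1 := pow_le_one₀ (abs_nonneg z) h1
    have hs : (0:ℝ) ≤ Real.sqrt (1 - z ^ 2) := Real.sqrt_nonneg _
    simp only [Real.norm_eq_abs, norm_mul, norm_div, abs_div, abs_mul, abs_pow,
      abs_of_nonneg hs, abs_abs, abs_one, div_eq_mul_inv, one_mul]
    have : |c| * |z| ^ k ≤ |c| := by nlinarith [abs_nonneg c]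
    exact mul_le_mul_of_nonneg_right this (by positivity)

lemma integral_quartic_div_sqrt (c0 c1 c2 c3 c4 : ℝ) :
    ∫ z in (-1:ℝ)..1, (c0 + c1*z + c2*z^2 + c3*z^3 + c4*z^4) / Real.sqrt (1 - z ^ 2)
      = (c0 + c2/2 + 3*c4/8) * Real.pi := by
  set p0 : ℝ := -(2*c3/3) - c1 with hp0
  set p1 : ℝ := -(3*c4/4 + c2)/2 with hp1
  set p2 : ℝ := -c3/3 with hp2
  set p3 : ℝ := -c4/4 with hp3
  set al : ℝ := c0 + c2/2 + 3*c4/8 with hal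
  set F : ℝ → ℝ := fun z => al * Real.arcsin z +
    (p0 + p1*z + p2*z^2 + p3*z^3) * Real.sqrt (1 - z ^ 2) with hF
  have hint : IntervalIntegrable
      (fun z : ℝ => (c0 + c1*z + c2*z^2 + c3*z^3 + c4*z^4) / Real.sqrt (1 - z ^ 2))
      volume (-1) 1 := by
    have h : (fun z : ℝ => (c0 + c1*z + c2*z^2 + c3*z^3 + c4*z^4) / Real.sqrt (1 - z ^ 2))
        = fun z : ℝ => c0 * z ^ 0 / Real.sqrt (1 - z ^ 2) + c1 * z ^ 1 / Real.sqrt (1 - z ^ 2)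
          + c2 * z ^ 2 / Real.sqrt (1 - z ^ 2) + c3 * z ^ 3 / Real.sqrt (1 - z ^ 2)
          + c4 * z ^ 4 / Real.sqrt (1 - z ^ 2) := by
      funext z
      rw [← add_div, ← add_div, ← add_div, ← add_div]
      norm_num
    rw [h]
    exact ((((intInt_monomial c0 0).add (intInt_monomial c1 1)).add
      (intInt_monomial c2 2)).add (intInt_monomial c3 3)).add (intInt_monomial c4 4)
  have hderiv : ∀ z ∈ Set.Ioo (-1:ℝ) 1, HasDerivAt F
      ((c0 + c1*z + c2*z^2 + c3*z^3 + c4*z^4) / Real.sqrt (1 - z ^ 2)) z := by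
    intro z hz
    have h1 : (0:ℝ) < 1 - z ^ 2 := by nlinarith [hz.1, hz.2]
    have hs : (0:ℝ) < Real.sqrt (1 - z ^ 2) := Real.sqrt_pos.2 h1
    have hs2 : Real.sqrt (1 - z ^ 2) ^ 2 = 1 - z ^ 2 := Real.sq_sqrt h1.le
    have hA : HasDerivAt Real.arcsin (1 / Real.sqrt (1 - z ^ 2)) z :=
      Real.hasDerivAt_arcsin hz.1.ne' hz.2.ne
    have hB : HasDerivAt (fun z : ℝ => Real.sqrt (1 - z ^ 2))
        (-z / Real.sqrt (1 - z ^ 2)) z := by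
      have hin : HasDerivAt (fun z : ℝ => 1 - z ^ 2) (-(2 * z ^ 1)) z :=
        (hasDerivAt_pow 2 z).const_sub 1
      have := (Real.hasDerivAt_sqrt h1.ne').comp z hin
      refine this.congr_deriv ?_
      field_simp
    have hP : HasDerivAt (fun z : ℝ => p0 + p1*z + p2*z^2 + p3*z^3)
        (p1 + 2*p2*z + 3*p3*z^2) z := by
      have : HasDerivAt (fun z : ℝ => p0 + p1*z + p2*z^2 + p3*z^3)
          (0 + p1 * 1 + p2 * (2 * z ^ 1) + p3 * (3 * z ^ 2)) z :=
        (((hasDerivAt_const z p0).add ((hasDerivAt_id z).const_mul p1)).add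
          ((hasDerivAt_pow 2 z).const_mul p2)).add ((hasDerivAt_pow 3 z).const_mul p3)
      convert this using 1
      ring
    have htot := (hA.const_mul al).add (hP.mul hB)
    refine htot.congr_deriv ?_
    set s := Real.sqrt (1 - z ^ 2) with hsdef
    have expand : al * (1 / s) + ((p1 + 2*p2*z + 3*p3*z^2) * s
        + (p0 + p1*z + p2*z^2 + p3*z^3) * (-z / s))
        = (al + (p1 + 2*p2*z + 3*p3*z^2) * s ^ 2 - z * (p0 + p1*z + p2*z^2 + p3*z^3)) / s := by
      field_simp
      ring
    rw [expand, hs2]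
    rw [div_eq_div_iff hs.ne' hs.ne']
    ring
  have hcont : ContinuousOn F (Set.Icc (-1:ℝ) 1) := by
    apply Continuous.continuousOn
    exact (continuous_const.mul Real.continuous_arcsin).add
      ((by continuity : Continuous fun z : ℝ => p0 + p1*z + p2*z^2 + p3*z^3).mul
        (Real.continuous_sqrt.comp (by continuity)))
  have := intervalIntegral.integral_eq_sub_of_hasDerivAt_of_le (by norm_num : (-1:ℝ) ≤ 1)
    hcont hderiv hint
  rw [this]
  simp only [hF]
  norm_num [Real.arcsin_one, Real.arcsin_neg_one]
  ring

end AuxIntegrals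

theorem Tgen_const_one (x y : ℝ) (hx : x ∈ Set.Ioo (-1 : ℝ) 1)
    (hy : y ∈ Set.Ioc (-1 : ℝ) 1) :
    Tgen y (fun _ => (1 : ℝ)) x = 1 := by
  obtain ⟨hx1, hx2⟩ := hx
  obtain ⟨hy1, hy2⟩ := hy
  have hx2' : (0:ℝ) < 1 - x ^ 2 := by nlinarith
  have hy2' : (0:ℝ) ≤ 1 - y ^ 2 := by nlinarith
  have ha2 : Real.sqrt (1 - x ^ 2) ^ 2 = 1 - x ^ 2 := Real.sq_sqrt hx2'.le
  have hb2 : Real.sqrt (1 - y ^ 2) ^ 2 = 1 - y ^ 2 := Real.sq_sqrt hy2'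
  set a := Real.sqrt (1 - x ^ 2) with hadef
  set b := Real.sqrt (1 - y ^ 2) with hbdef
  have key : ∀ z : ℝ, Bker y x z * (1:ℝ) / Real.sqrt (1 - z ^ 2)
      = ((2*a^2 + x^2*y^2 - 1) + (4*x*a*b - 2*x*y*a*b)*z
        + (-4*a^2 + a^2*b^2 + 4*y*a^2 + 2*x^2*b^2)*z^2 + (-4*x*a*b + 4*x*y*a*b)*z^3
        + (2*a^2 - 4*y*a^2 + 2*y^2*a^2)*z^4) / Real.sqrt (1 - z ^ 2) := by
    intro z
    congr 1
    simp only [Bker, Rker, ← hadef, ← hbdef]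
    ring
  simp only [Tgen]
  rw [intervalIntegral.integral_congr (g := fun z : ℝ =>
      ((2*a^2 + x^2*y^2 - 1) + (4*x*a*b - 2*x*y*a*b)*z
        + (-4*a^2 + a^2*b^2 + 4*y*a^2 + 2*x^2*b^2)*z^2 + (-4*x*a*b + 4*x*y*a*b)*z^3
        + (2*a^2 - 4*y*a^2 + 2*y^2*a^2)*z^4) / Real.sqrt (1 - z ^ 2))
      (fun z _ => key z)]
  rw [integral_quartic_div_sqrt]
  have halpha : (2*a^2 + x^2*y^2 - 1) + (-4*a^2 + a^2*b^2 + 4*y*a^2 + 2*x^2*b^2)/2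
      + 3*(2*a^2 - 4*y*a^2 + 2*y^2*a^2)/8 = (1 - x^2) * (1 + y)^2 / 4 := by
    linear_combination (3/4 + 1/2*b^2 + 1/2*y + 3/4*y^2) * ha2 + (1 + x^2)/2 * hb2
  rw [halpha]
  have hpi := Real.pi_pos
  have h1y : (0:ℝ) < 1 + y := by linarith
  field_simp
end
end
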